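/- If f : ℤ → ℤ is a bijection satisfying f(x+n) = f(x)+n for all x (an affine permutation), and f∘f equals the shift x ↦ x+n, then the induced permutation of ℤ/nℤ (reducing f mod n) is a fixed-point-free involution when n is even. -/

import Mathlib

/-- If f is an affine permutation (a bijection ℤ → ℤ with f(x+n) = f(x)+n) whose square is
the shift x ↦ x+n, then for even n > 0 the induced permutation of ℤ/nℤ is a
fixed-point-free involution. -/
theorem affine_permutation_square_shift (n : ℕ) (hn : 0 < n) (hev : Even n)
    (f : ℤ → ℤ) (hbij : Function.Bijective f)
    (hper : ∀ x : ℤ, f (x + n) = f x + n)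
    (hsq : ∀ x : ℤ, f (f x) = x + n) :
    ∃ g : Equiv.Perm (ZMod n),
      (∀ x : ℤ, g (x : ZMod n) = (f x : ZMod n)) ∧ g * g = 1 ∧ ∀ z, g z ≠ z := by
  haveI : NeZero n := ⟨hn.ne'⟩
  have hmul : ∀ (c x : ℤ), f (x + n * c) = f x + n * c := by
    intro c
    induction c using Int.induction_on with
    | zero => simp
    | succ k ih =>
        intro x
        have := hper (x + n * k)
        rw [ih] at this
        rw [show x + n * (k + 1) = x + n * k + n by ring, this]
        ring
    | pred k ih =>
        intro x
        have h := hper (x + n * (-(k:ℤ) - 1))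
        rw [show x + n * (-(k:ℤ) - 1) + n = x + n * (-(k:ℤ)) by ring, ih] at h
        linear_combination -h
  have hcong : ∀ x y : ℤ, (n:ℤ) ∣ x - y → (n:ℤ) ∣ f x - f y := by
    intro x y ⟨c, hc⟩
    have : x = y + n * c := by omega
    rw [this, hmul]
    exact ⟨c, by ring⟩
  -- define F on ZMod n
  set F : ZMod n → ZMod n := fun z => ((f (z.val : ℤ) : ℤ) : ZMod n) with hF
  have key : ∀ x : ℤ, F (x : ZMod n) = (f x : ZMod n) := by
    intro x
    have h1 : (n:ℤ) ∣ ((x : ZMod n).val : ℤ) - x := by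
      have := ZMod.intCast_zmod_eq_zero_iff_dvd (((x : ZMod n).val : ℤ) - x) n
      apply this.mp
      push_cast
      simp
    have h2 := hcong _ _ h1
    rw [hF]
    simp only []
    have := (ZMod.intCast_zmod_eq_zero_iff_dvd (f ((x : ZMod n).val : ℤ) - f x) n).mpr h2
    push_cast at this
    linear_combination this
  have hFF : ∀ z, F (F z) = z := by
    intro z
    have hz : ((z.val : ℤ) : ZMod n) = z := by simp [ZMod.intCast_zmod_cast]
    calc F (F z) = F ((f (z.val : ℤ) : ℤ) : ZMod n) := rfl
    _ = ((f (f (z.val : ℤ)) : ℤ) : ZMod n) := key _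
    _ = (((z.val : ℤ) + n : ℤ) : ZMod n) := by rw [hsq]
    _ = z := by push_cast; simp [hz]
  refine ⟨⟨F, F, hFF, hFF⟩, key, ?_, ?_⟩
  · ext z; exact hFF z
  · intro z hzz
    -- hzz : F z = z
    have hz : ((z.val : ℤ) : ZMod n) = z := by simp [ZMod.intCast_zmod_cast]
    set x : ℤ := (z.val : ℤ)
    have h1 : ((f x : ℤ) : ZMod n) = (x : ZMod n) := by
      have : F z = z := hzz
      exact this.trans hz.symm
    have h2 : (n:ℤ) ∣ f x - x := by
      have := (ZMod.intCast_zmod_eq_zero_iff_dvd (f x - x) n).mp (by push_cast; rw [h1]; ring)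
      exact this
    obtain ⟨c, hc⟩ := h2
    have hfx : f x = x + n * c := by omega
    have := hsq x
    rw [hfx, hmul, hfx] at this
    have hn' : (n:ℤ) ≠ 0 := by exact_mod_cast hn.ne'
    have h3 : (n:ℤ) * (2 * c) = n * 1 := by linear_combination this
    have : 2 * c = 1 := mul_left_cancel₀ hn' h3
    omega
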